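/- Let G = C_{n₁}□⋯□C_{n_r} be the Cartesian product of r even cycles (each n_i a positive even integer, n_i ≥ 4 so the cycles are simple graphs). Then for every vertex v of G, the betweenness centrality is B(v) = (1/8)·[ (∏_{i=1}^r n_i)·(∑_{i=1}^r n_i) − 4·( ∏_{i=1}^r n_i − 1 ) ]. Equivalently, writing n_i = 2k_i, B(v) = 2^{r−2}·(∏_{i=1}^r k_i)·( ∑_{i=1}^r k_i − 2 ) + 1/2. -/

import Mathlib

open SimpleGraph Finset

/-- The number of shortest `u`-`v` paths (geodesics) in `G`:
the number of paths from `u` to `v` whose length equals the distance `d_G(u,v)`. -/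
noncomputable def geodesicCount {V : Type*} (G : SimpleGraph V) (u v : V) : ℕ :=
  Nat.card {p : G.Walk u v // p.IsPath ∧ p.length = G.dist u v}

/-- The number of shortest `u`-`v` paths in `G` that pass through the vertex `x`. -/
noncomputable def geodesicCountThrough {V : Type*} (G : SimpleGraph V) (u v x : V) : ℕ :=
  Nat.card {p : G.Walk u v // p.IsPath ∧ p.length = G.dist u v ∧ x ∈ p.support}

/-- The pair-dependency of the pair `{u,v}` on `x`:
`δ(u,v|x) = σ(u,v|x) / σ(u,v)`. -/
noncomputable def pairDependency {V : Type*} (G : SimpleGraph V) (u v x : V) : ℚ :=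
  (geodesicCountThrough G u v x : ℚ) / (geodesicCount G u v : ℚ)

/-- The betweenness centrality of a vertex `x`: the sum of the pair-dependencies
`σ(u,v|x)/σ(u,v)` over unordered pairs `{u,v}` with `u ≠ v`, `u ≠ x`, `v ≠ x`
(each unordered pair is counted once, hence the factor `1/2` over ordered pairs). -/
noncomputable def betweenness {V : Type*} [Fintype V] [DecidableEq V] (G : SimpleGraph V) (x : V) : ℚ :=
  (1 / 2) * ∑ u, ∑ v,
    if u ≠ v ∧ u ≠ x ∧ v ≠ x then pairDependency G u v x else 0

/-- The Cartesian (box) product of a family of graphs: two tuples are adjacent iff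
they agree in all but one coordinate and differ by an edge in that coordinate. -/
def boxProdPi {ι : Type*} {V : ι → Type*} (G : ∀ i, SimpleGraph (V i)) :
    SimpleGraph (∀ i, V i) where
  Adj u v := ∃ i, (G i).Adj (u i) (v i) ∧ ∀ j, j ≠ i → u j = v j
  symm := by
    constructor
    rintro u v ⟨i, hadj, heq⟩
    exact ⟨i, hadj.symm, fun j hj => (heq j hj).symm⟩
  loopless := by
    constructor
    rintro u ⟨i, hadj, -⟩
    exact (G i).loopless.irrefl _ hadj

section general
variable {V : Type*} [Fintype V] [DecidableEq V] {G : SimpleGraph V}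

lemma finite_geo (u v : V) (Q : G.Walk u v → Prop) :
    Finite {p : G.Walk u v // p.IsPath ∧ Q p} := by
  classical
  haveI : DecidableRel G.Adj := Classical.decRel _
  exact Finite.of_injective (fun p => (⟨p.1, p.2.1⟩ : G.Path u v))
    (fun a b h => Subtype.ext (congrArg (fun q : G.Path u v => q.1) h))

lemma geodesicCount_pos (h : G.Reachable u v) : 0 < geodesicCount G u v := by
  haveI := finite_geo (G := G) u v (fun p => p.length = G.dist u v)
  rw [geodesicCount, Nat.card_pos_iff]
  obtain ⟨p, hp⟩ := h.exists_walk_length_eq_dist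
  exact ⟨⟨⟨p, p.isPath_of_length_eq_dist hp, hp⟩⟩, inferInstance⟩

lemma sum_through (u v : V) (h : u ≠ v) :
    ∑ x, (if x ≠ u ∧ x ≠ v then geodesicCountThrough G u v x else 0)
      = geodesicCount G u v * (G.dist u v - 1) := by
  classical
  haveI := finite_geo (G := G) u v (fun p => p.length = G.dist u v)
  haveI : Fintype {p : G.Walk u v // p.IsPath ∧ p.length = G.dist u v} := Fintype.ofFinite _
  set T := {p : G.Walk u v // p.IsPath ∧ p.length = G.dist u v}
  have hthrough : ∀ x, geodesicCountThrough G u v x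
      = ∑ p : T, if x ∈ p.1.support then 1 else 0 := by
    intro x
    have e : {p : G.Walk u v // p.IsPath ∧ p.length = G.dist u v ∧ x ∈ p.support}
        ≃ {p : T // x ∈ p.1.support} :=
      { toFun := fun p => ⟨⟨p.1, p.2.1, p.2.2.1⟩, p.2.2.2⟩
        invFun := fun p => ⟨p.1.1, p.1.2.1, p.1.2.2, p.2⟩
        left_inv := fun p => rfl
        right_inv := fun p => rfl }
    rw [geodesicCountThrough, Nat.card_congr e, Nat.card_eq_fintype_card,
      Fintype.card_subtype, Finset.card_eq_sum_ones, Finset.sum_filter]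
  calc ∑ x, (if x ≠ u ∧ x ≠ v then geodesicCountThrough G u v x else 0)
      = ∑ x, ∑ p : T, if x ≠ u ∧ x ≠ v ∧ x ∈ p.1.support then 1 else 0 := by
        refine Finset.sum_congr rfl fun x _ => ?_
        rw [hthrough]
        by_cases hx : x ≠ u ∧ x ≠ v
        · rw [if_pos hx]
          refine Finset.sum_congr rfl fun p _ => ?_
          by_cases hs : x ∈ (p.1).support <;> simp [hs, hx.1, hx.2]
        · simp only [hx, if_false]
          rw [eq_comm]
          refine Finset.sum_eq_zero fun p _ => ?_
          rw [if_neg]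
          tauto
    _ = ∑ p : T, ∑ x, if x ≠ u ∧ x ≠ v ∧ x ∈ p.1.support then 1 else 0 := Finset.sum_comm
    _ = ∑ p : T, (G.dist u v - 1) := by
        refine Finset.sum_congr rfl fun p _ => ?_
        rw [Finset.sum_ite, Finset.sum_const_zero, add_zero, Finset.sum_const,
          smul_eq_mul, mul_one]
        have : Finset.filter (fun x => x ≠ u ∧ x ≠ v ∧ x ∈ p.1.support) Finset.univ
            = p.1.support.toFinset \ {u, v} := by
          ext x
          simp only [Finset.mem_filter, Finset.mem_univ, true_and, Finset.mem_sdiff,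
            List.mem_toFinset, Finset.mem_insert, Finset.mem_singleton]
          tauto
        rw [this, Finset.card_sdiff_of_subset, List.toFinset_card_of_nodup p.2.1.support_nodup]
        · rw [SimpleGraph.Walk.length_support, p.2.2]
          rw [Finset.card_pair h]
          omega
        · intro x hx
          simp only [Finset.mem_insert, Finset.mem_singleton] at hx
          rcases hx with rfl | rfl
          · exact List.mem_toFinset.2 p.1.start_mem_support
          · exact List.mem_toFinset.2 p.1.end_mem_support
    _ = geodesicCount G u v * (G.dist u v - 1) := by
        rw [Finset.sum_const, smul_eq_mul, geodesicCount, Nat.card_eq_fintype_card]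
        rfl

end general


open SimpleGraph Finset
section general
variable {V : Type*} [Fintype V] [DecidableEq V] {G : SimpleGraph V}


lemma sum_betweenness (hc : G.Connected) :
    ∑ x, betweenness G x
      = (1/2) * ∑ u, ∑ v, (if u ≠ v then ((G.dist u v : ℚ) - 1) else 0) := by
  unfold betweenness
  rw [← Finset.mul_sum]
  congr 1
  rw [Finset.sum_comm]
  refine Finset.sum_congr rfl fun u _ => ?_
  rw [Finset.sum_comm]
  refine Finset.sum_congr rfl fun v _ => ?_
  by_cases huv : u ≠ v
  · rw [if_pos huv]
    have hσ : (geodesicCount G u v : ℚ) ≠ 0 := by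
      exact_mod_cast (geodesicCount_pos (hc.preconnected u v)).ne'
    have key : ∑ x, (if u ≠ v ∧ u ≠ x ∧ v ≠ x then pairDependency G u v x else 0)
        = (∑ x, (if x ≠ u ∧ x ≠ v then (geodesicCountThrough G u v x : ℚ) else 0))
          / (geodesicCount G u v : ℚ) := by
      rw [Finset.sum_div]
      refine Finset.sum_congr rfl fun x _ => ?_
      by_cases hx : x ≠ u ∧ x ≠ v
      · rw [if_pos ⟨huv, hx.1.symm, hx.2.symm⟩, if_pos hx, pairDependency]
      · rw [if_neg (by tauto), if_neg hx, zero_div]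
    rw [key]
    have := sum_through (G := G) u v huv
    have hcast : (∑ x, (if x ≠ u ∧ x ≠ v then (geodesicCountThrough G u v x : ℚ) else 0))
        = ((geodesicCount G u v * (G.dist u v - 1) : ℕ) : ℚ) := by
      rw [← this]
      push_cast
      refine Finset.sum_congr rfl fun x _ => ?_
      split <;> simp
    rw [hcast]
    have hd : 1 ≤ G.dist u v := hc.pos_dist_of_ne huv
    push_cast [Nat.cast_sub hd]
    field_simp
  · rw [if_neg huv]
    refine Finset.sum_eq_zero fun x _ => by rw [if_neg (by tauto)]
end general

section iso
variable {V : Type*} [Fintype V] [DecidableEq V] {G : SimpleGraph V}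

lemma iso_dist_le (f : G ≃g G) (u v : V) : G.dist (f u) (f v) ≤ G.dist u v := by
  by_cases hr : G.Reachable u v
  · obtain ⟨p, hp⟩ := hr.exists_walk_length_eq_dist
    calc G.dist (f u) (f v) ≤ (p.map f.toHom).length := SimpleGraph.dist_le _
      _ = G.dist u v := by rw [SimpleGraph.Walk.length_map, hp]
  · have hr' : ¬ G.Reachable (f u) (f v) := by
      intro hq
      obtain ⟨q⟩ := hq
      exact hr ⟨(q.map f.symm.toHom).copy (RelIso.symm_apply_apply _ _)
        (RelIso.symm_apply_apply _ _)⟩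
    rw [SimpleGraph.dist_eq_zero_of_not_reachable hr,
      SimpleGraph.dist_eq_zero_of_not_reachable hr']

lemma iso_dist_eq (f : G ≃g G) (u v : V) : G.dist (f u) (f v) = G.dist u v := by
  refine le_antisymm (iso_dist_le f u v) ?_
  have := iso_dist_le f.symm (f u) (f v)
  simpa using this

lemma geodesicCount_le_iso (f : G ≃g G) (u v : V) :
    geodesicCount G u v ≤ geodesicCount G (f u) (f v) := by
  haveI := finite_geo (G := G) (f u) (f v) (fun p => p.length = G.dist (f u) (f v))
  refine Nat.card_le_card_of_injective
    (fun p => (⟨p.1.map f.toHom, ?_, ?_⟩ :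
      {q : G.Walk (f u) (f v) // q.IsPath ∧ q.length = G.dist (f u) (f v)})) ?_
  · exact SimpleGraph.Walk.map_isPath_of_injective (f := f.toHom) (fun a b h => f.injective h) p.2.1
  · rw [SimpleGraph.Walk.length_map, iso_dist_eq]; exact p.2.2
  · intro a b hab
    exact Subtype.ext (SimpleGraph.Walk.map_injective_of_injective f.injective u v
      (congrArg Subtype.val hab))

lemma geodesicCount_iso (f : G ≃g G) (u v : V) :
    geodesicCount G (f u) (f v) = geodesicCount G u v := by
  refine le_antisymm ?_ (geodesicCount_le_iso f u v)
  have := geodesicCount_le_iso f.symm (f u) (f v)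
  simpa using this

lemma geodesicCountThrough_le_iso (f : G ≃g G) (u v x : V) :
    geodesicCountThrough G u v x ≤ geodesicCountThrough G (f u) (f v) (f x) := by
  haveI := finite_geo (G := G) (f u) (f v)
    (fun p => p.length = G.dist (f u) (f v) ∧ f x ∈ p.support)
  refine Nat.card_le_card_of_injective
    (fun p => (⟨p.1.map f.toHom, ?_, ?_, ?_⟩ :
      {q : G.Walk (f u) (f v) //
        q.IsPath ∧ q.length = G.dist (f u) (f v) ∧ f x ∈ q.support})) ?_
  · exact SimpleGraph.Walk.map_isPath_of_injective (f := f.toHom) (fun a b h => f.injective h) p.2.1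
  · rw [SimpleGraph.Walk.length_map, iso_dist_eq]; exact p.2.2.1
  · rw [SimpleGraph.Walk.support_map]
    exact List.mem_map_of_mem p.2.2.2
  · intro a b hab
    exact Subtype.ext (SimpleGraph.Walk.map_injective_of_injective f.injective u v
      (congrArg Subtype.val hab))

lemma geodesicCountThrough_iso (f : G ≃g G) (u v x : V) :
    geodesicCountThrough G (f u) (f v) (f x) = geodesicCountThrough G u v x := by
  refine le_antisymm ?_ (geodesicCountThrough_le_iso f u v x)
  have := geodesicCountThrough_le_iso f.symm (f u) (f v) (f x)
  simpa using this

lemma pairDependency_iso (f : G ≃g G) (u v x : V) :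
    pairDependency G (f u) (f v) (f x) = pairDependency G u v x := by
  rw [pairDependency, pairDependency, geodesicCount_iso, geodesicCountThrough_iso]

lemma betweenness_iso (f : G ≃g G) (x : V) :
    betweenness G (f x) = betweenness G x := by
  rw [betweenness, betweenness]
  congr 1
  rw [← Equiv.sum_comp f.toEquiv (fun u => ∑ v, if u ≠ v ∧ u ≠ f x ∧ v ≠ f x
    then pairDependency G u v (f x) else 0)]
  refine Finset.sum_congr rfl fun u _ => ?_
  rw [← Equiv.sum_comp f.toEquiv (fun v => if f.toEquiv u ≠ v ∧ f.toEquiv u ≠ f x ∧ v ≠ f x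
    then pairDependency G (f.toEquiv u) v (f x) else 0)]
  refine Finset.sum_congr rfl fun v _ => ?_
  have h1 : (f.toEquiv u ≠ f.toEquiv v ∧ f.toEquiv u ≠ f x ∧ f.toEquiv v ≠ f x)
      ↔ (u ≠ v ∧ u ≠ x ∧ v ≠ x) := by
    constructor
    · rintro ⟨h1, h2, h3⟩
      exact ⟨fun h => h1 (congrArg _ h), fun h => h2 (congrArg _ h),
        fun h => h3 (congrArg _ h)⟩
    · rintro ⟨h1, h2, h3⟩
      exact ⟨fun h => h1 (f.injective h), fun h => h2 (f.injective h),
        fun h => h3 (f.injective h)⟩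
  rw [if_congr h1 rfl rfl]
  by_cases hc : u ≠ v ∧ u ≠ x ∧ v ≠ x
  · rw [if_pos hc, if_pos hc]
    exact pairDependency_iso f u v x
  · rw [if_neg hc, if_neg hc]

lemma betweenness_const (h : ∀ x y : V, ∃ f : G ≃g G, f x = y) (x y : V) :
    betweenness G x = betweenness G y := by
  obtain ⟨f, rfl⟩ := h x y
  exact (betweenness_iso f x).symm

end iso

section cycle
variable {n : ℕ} [NeZero n]

lemma fin_sub_val (a b : Fin n) :
    (a - b).val = if b.val ≤ a.val then a.val - b.val else n - b.val + a.val := by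
  have ha := a.isLt
  have hb := b.isLt
  rw [Fin.sub_def]
  show (n - b.val + a.val) % n = _
  rcases le_or_gt n (n - b.val + a.val) with h | h
  · rw [Nat.mod_eq_sub_mod h, Nat.mod_eq_of_lt (by omega)]
    split_ifs <;> omega
  · rw [Nat.mod_eq_of_lt h]
    split_ifs <;> omega

lemma fin_neg_val (z : Fin n) : (-z).val = if z.val = 0 then 0 else n - z.val := by
  have h := fin_sub_val (0 : Fin n) z
  rw [zero_sub] at h
  rw [h, Fin.val_zero]
  have hz := z.isLt
  split_ifs <;> omega

lemma fin_val_one (h2 : 2 ≤ n) : (1 : Fin n).val = 1 := by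
  rw [Fin.val_one', Nat.mod_eq_of_lt (by omega)]

lemma gstep_add (h2 : 2 ≤ n) (x : Fin n) :
    min ((x + 1).val) ((-(x + 1)).val) ≤ min x.val ((-x).val) + 1 := by
  have hx := x.isLt
  have hadd : (x + 1).val = if n ≤ x.val + 1 then x.val + 1 - n else x.val + 1 := by
    rw [Fin.val_add_eq_ite, fin_val_one h2]
  rw [fin_neg_val, fin_neg_val, hadd]
  split_ifs <;> omega

lemma gstep_sub (h2 : 2 ≤ n) (x : Fin n) :
    min ((x - 1).val) ((-(x - 1)).val) ≤ min x.val ((-x).val) + 1 := by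
  have hx := x.isLt
  have hsub : (x - 1).val = if 1 ≤ x.val then x.val - 1 else n - 1 + x.val := by
    rw [fin_sub_val, fin_val_one h2]
  rw [fin_neg_val, fin_neg_val, hsub]
  split_ifs <;> omega

open SimpleGraph in
lemma cycle_adj_lipschitz (h2 : 2 ≤ n) {u w : Fin n} (hadj : (cycleGraph n).Adj u w)
    (v : Fin n) :
    min ((v - u).val) ((u - v).val) ≤ min ((v - w).val) ((w - v).val) + 1 := by
  have hone : ∀ z : Fin n, z.val = 1 → z = 1 := by
    intro z hz
    exact Fin.ext (by rw [hz, fin_val_one h2])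
  have hwv : w - v = -(v - w) := (neg_sub v w).symm
  have huv : u - v = -(v - u) := (neg_sub v u).symm
  rcases cycleGraph_adj'.mp hadj with h | h
  · -- (u - w).val = 1
    have h1 : u - w = 1 := hone _ h
    have hvu : v - u = (v - w) - 1 := by
      rw [← h1]
      exact (sub_sub_sub_cancel_right v u w).symm
    rw [hvu, huv, hvu, hwv]
    exact gstep_sub h2 (v - w)
  · -- (w - u).val = 1
    have h1 : w - u = 1 := hone _ h
    have hvu : v - u = (v - w) + 1 := by
      rw [← h1, ← sub_add_sub_cancel v w u]
    rw [hvu, huv, hvu, hwv]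
    exact gstep_add h2 (v - w)

open SimpleGraph in
lemma cycle_walk_length_le (h2 : 2 ≤ n) {u v : Fin n} (p : (cycleGraph n).Walk u v) :
    min ((v - u).val) ((u - v).val) ≤ p.length := by
  induction p with
  | nil => simp
  | @cons a b c hadj q ih =>
    calc min ((c - a).val) ((a - c).val)
        ≤ min ((c - b).val) ((b - c).val) + 1 := cycle_adj_lipschitz h2 hadj c
      _ ≤ q.length + 1 := by omega
      _ = (SimpleGraph.Walk.cons hadj q).length := (SimpleGraph.Walk.length_cons _ _).symm

open SimpleGraph in
lemma cycle_walk_exists (h2 : 2 ≤ n) :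
    ∀ (m : ℕ) (u v : Fin n), (v - u).val = m →
      ∃ p : (cycleGraph n).Walk u v, p.length = m := by
  intro m
  induction m with
  | zero =>
    intro u v h
    have : v = u := by
      have : v - u = 0 := Fin.ext (by rw [h, Fin.val_zero])
      have := sub_eq_zero.mp this
      exact this
    subst this
    exact ⟨SimpleGraph.Walk.nil, rfl⟩
  | succ m ih =>
    intro u v h
    have hadj : (cycleGraph n).Adj u (u + 1) := by
      rw [cycleGraph_adj']
      right
      rw [add_sub_cancel_left, fin_val_one h2]
    have hnext : (v - (u + 1)).val = m := by
      have hexp : v - (u + 1) = (v - u) - 1 := by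
        rw [sub_add_eq_sub_sub]
      rw [hexp, fin_sub_val, fin_val_one h2, h]
      simp
    obtain ⟨q, hq⟩ := ih (u + 1) v hnext
    exact ⟨SimpleGraph.Walk.cons hadj q, by rw [SimpleGraph.Walk.length_cons, hq]⟩

open SimpleGraph in
lemma cycle_dist (h2 : 2 ≤ n) (u v : Fin n) :
    (cycleGraph n).dist u v = min ((v - u).val) ((u - v).val) := by
  refine le_antisymm ?_ ?_
  · rcases le_total ((v - u).val) ((u - v).val) with h | h
    · obtain ⟨p, hp⟩ := cycle_walk_exists h2 _ u v rfl
      rw [min_eq_left h]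
      exact hp ▸ SimpleGraph.dist_le p
    · obtain ⟨p, hp⟩ := cycle_walk_exists h2 _ v u rfl
      rw [min_eq_right h, SimpleGraph.dist_comm]
      exact hp ▸ SimpleGraph.dist_le p
  · have hr : (cycleGraph n).Reachable u v := by
      have hc : (cycleGraph n).Connected := by
        obtain ⟨m, rfl⟩ : ∃ m, n = m + 1 := ⟨n - 1, by omega⟩
        exact cycleGraph_connected
      exact hc.preconnected u v
    obtain ⟨p, hp⟩ := hr.exists_walk_length_eq_dist
    rw [← hp]
    exact cycle_walk_length_le h2 p

lemma sum_min_range (k : ℕ) :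
    ∑ d ∈ Finset.range (2 * k), min d (2 * k - d) = k * k := by
  induction k with
  | zero => simp
  | succ k ih =>
    have h1 : 2 * (k + 1) = (2 * k + 1) + 1 := by ring
    rw [h1, Finset.sum_range_succ' (fun d => min d (2 * k + 1 + 1 - d)) (2 * k + 1)]
    have h2 : ∀ d ∈ Finset.range (2 * k + 1), min (d + 1) (2 * k + 1 + 1 - (d + 1))
        = min d (2 * k - d) + 1 := by
      intro d hd
      rw [Finset.mem_range] at hd
      omega
    rw [Finset.sum_congr rfl h2, Finset.sum_add_distrib, Finset.sum_const,
      Finset.card_range, Finset.sum_range_succ]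
    simp only [smul_eq_mul, mul_one]
    have : min (2 * k) (2 * k - 2 * k) = 0 := by omega
    rw [this, add_zero, ih]
    ring_nf
    omega

lemma cycle_dist_sum (k : ℕ) (hk : 0 < k) (u : Fin (2 * k)) :
    haveI : NeZero (2 * k) := ⟨by omega⟩
    ∑ v : Fin (2 * k), (SimpleGraph.cycleGraph (2 * k)).dist u v = k * k := by
  haveI : NeZero (2 * k) := ⟨by omega⟩
  have h2 : 2 ≤ 2 * k := by omega
  calc ∑ v : Fin (2 * k), (SimpleGraph.cycleGraph (2 * k)).dist u v
      = ∑ v : Fin (2 * k), min ((v - u).val) ((u - v).val) := by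
        exact Finset.sum_congr rfl fun v _ => cycle_dist h2 u v
    _ = ∑ z : Fin (2 * k), min z.val ((-z).val) := by
        rw [← Equiv.sum_comp (Equiv.subRight u) (fun z : Fin (2*k) => min z.val ((-z).val))]
        refine Finset.sum_congr rfl fun v _ => ?_
        have : (Equiv.subRight u) v = v - u := rfl
        rw [this, neg_sub]
    _ = ∑ z : Fin (2 * k), min z.val (if z.val = 0 then 0 else 2 * k - z.val) := by
        exact Finset.sum_congr rfl fun z _ => by rw [fin_neg_val]
    _ = ∑ d ∈ Finset.range (2 * k), min d (if d = 0 then 0 else 2 * k - d) :=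
        Fin.sum_univ_eq_sum_range (fun d => min d (if d = 0 then 0 else 2 * k - d)) (2 * k)
    _ = ∑ d ∈ Finset.range (2 * k), min d (2 * k - d) := by
        refine Finset.sum_congr rfl fun d hd => ?_
        rw [Finset.mem_range] at hd
        split_ifs with h
        · omega
        · rfl
    _ = k * k := sum_min_range k

end cycle

section prod
open SimpleGraph
variable {ι : Type*} [Fintype ι] [DecidableEq ι] {V : ι → Type*} {G : ∀ i, SimpleGraph (V i)}

lemma boxProdPi_adj {u v : ∀ i, V i} : (boxProdPi G).Adj u v
    ↔ ∃ i, (G i).Adj (u i) (v i) ∧ ∀ j, j ≠ i → u j = v j := Iff.rfl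

lemma boxProdPi_walk_length_ge (hconn : ∀ i, (G i).Connected) :
    ∀ {u v : ∀ i, V i} (p : (boxProdPi G).Walk u v),
      ∑ i, (G i).dist (u i) (v i) ≤ p.length := by
  intro u v p
  induction p with
  | nil => simp
  | @cons a b c hadj q ih =>
    obtain ⟨i0, hadj0, heq⟩ := id hadj
    have hstep : ∀ i, (G i).dist (a i) (c i)
        ≤ (G i).dist (b i) (c i) + (if i = i0 then 1 else 0) := by
      intro i
      by_cases hi : i = i0
      · subst hi
        rw [if_pos rfl]
        calc (G i).dist (a i) (c i) ≤ (G i).dist (a i) (b i) + (G i).dist (b i) (c i) :=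
              (hconn i).dist_triangle
          _ = 1 + (G i).dist (b i) (c i) := by
              rw [SimpleGraph.dist_eq_one_iff_adj.mpr hadj0]
          _ = (G i).dist (b i) (c i) + 1 := by omega
      · rw [heq i hi, if_neg hi, add_zero]
    calc ∑ i, (G i).dist (a i) (c i)
        ≤ ∑ i, ((G i).dist (b i) (c i) + (if i = i0 then 1 else 0)) :=
          Finset.sum_le_sum fun i _ => hstep i
      _ = (∑ i, (G i).dist (b i) (c i)) + 1 := by
          rw [Finset.sum_add_distrib, Finset.sum_ite_eq' Finset.univ i0 (fun _ => 1)]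
          simp
      _ ≤ q.length + 1 := by omega
      _ = (SimpleGraph.Walk.cons hadj q).length := by
          rw [SimpleGraph.Walk.length_cons]

lemma boxProdPi_lift_walk {i0 : ι} {a b : V i0} (q : (G i0).Walk a b)
    (z : ∀ i, V i) (hz : z i0 = a) :
    ∃ p : (boxProdPi G).Walk z (Function.update z i0 b), p.length = q.length := by
  induction q generalizing z with
  | nil =>
    subst hz
    exact ⟨SimpleGraph.Walk.nil.copy rfl (Function.update_eq_self i0 z).symm, by simp⟩
  | @cons a c b hadj q' ih =>
    have hadj' : (boxProdPi G).Adj z (Function.update z i0 c) := by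
      rw [boxProdPi_adj]
      refine ⟨i0, ?_, fun j hj => (Function.update_of_ne hj c z).symm⟩
      rw [Function.update_self, hz]
      exact hadj
    obtain ⟨p', hp'⟩ := ih (Function.update z i0 c) (Function.update_self i0 c z)
    refine ⟨SimpleGraph.Walk.cons hadj' (p'.copy rfl ?_), ?_⟩
    · rw [Function.update_idem]
    · rw [SimpleGraph.Walk.length_cons, SimpleGraph.Walk.length_copy, hp',
        SimpleGraph.Walk.length_cons]

lemma boxProdPi_exists_walk (hconn : ∀ i, (G i).Connected) (u v : ∀ i, V i) :
    ∃ p : (boxProdPi G).Walk u v, p.length = ∑ i, (G i).dist (u i) (v i) := by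
  classical
  have key : ∀ s : Finset ι, ∃ p : (boxProdPi G).Walk u
      (fun i => if i ∈ s then v i else u i),
      p.length = ∑ i ∈ s, (G i).dist (u i) (v i) := by
    intro s
    induction s using Finset.induction with
    | empty => exact ⟨SimpleGraph.Walk.nil.copy rfl (by simp), by simp⟩
    | @insert i0 s hi0 ih =>
      obtain ⟨p, hp⟩ := ih
      obtain ⟨q, hq⟩ := ((hconn i0).preconnected (u i0) (v i0)).exists_walk_length_eq_dist
      obtain ⟨p', hp'⟩ := boxProdPi_lift_walk q (fun i => if i ∈ s then v i else u i)
        (by simp [hi0])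
      have hend : Function.update (fun i => if i ∈ s then v i else u i) i0 (v i0)
          = fun i => if i ∈ insert i0 s then v i else u i := by
        funext j
        by_cases hj : j = i0
        · subst hj; simp
        · rw [Function.update_of_ne hj]
          simp [hj]
      refine ⟨p.append (p'.copy rfl hend), ?_⟩
      rw [SimpleGraph.Walk.length_append, SimpleGraph.Walk.length_copy, hp', hq, hp,
        Finset.sum_insert hi0]
      omega
  obtain ⟨p, hp⟩ := key Finset.univ
  refine ⟨p.copy rfl (by funext j; simp), ?_⟩
  rw [SimpleGraph.Walk.length_copy, hp]

lemma boxProdPi_connected (hconn : ∀ i, (G i).Connected) :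
    (boxProdPi G).Connected := by
  haveI : ∀ i, Nonempty (V i) := fun i => (hconn i).nonempty
  constructor
  intro u v
  obtain ⟨p, _⟩ := boxProdPi_exists_walk hconn u v
  exact ⟨p⟩

lemma boxProdPi_dist (hconn : ∀ i, (G i).Connected) (u v : ∀ i, V i) :
    (boxProdPi G).dist u v = ∑ i, (G i).dist (u i) (v i) := by
  refine le_antisymm ?_ ?_
  · obtain ⟨p, hp⟩ := boxProdPi_exists_walk hconn u v
    exact hp ▸ SimpleGraph.dist_le p
  · obtain ⟨p, hp⟩ := ((boxProdPi_connected hconn).preconnected u v).exists_walk_length_eq_dist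
    rw [← hp]
    exact boxProdPi_walk_length_ge hconn p

/-- Product of isomorphisms is an isomorphism of box products. -/
def boxProdPiIso (f : ∀ i, G i ≃g G i) : boxProdPi G ≃g boxProdPi G where
  toEquiv := Equiv.piCongrRight (fun i => (f i).toEquiv)
  map_rel_iff' := by
    intro u v
    constructor
    · rintro ⟨i, hadj, heq⟩
      refine ⟨i, (f i).map_rel_iff.mp hadj, fun j hj => (f j).injective (heq j hj)⟩
    · rintro ⟨i, hadj, heq⟩
      exact ⟨i, (f i).map_rel_iff.mpr hadj, fun j hj => congrArg (f j) (heq j hj)⟩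

end prod

section main
open SimpleGraph

lemma cycleGraph_connected' {m : ℕ} (h : 1 ≤ m) : (cycleGraph m).Connected := by
  obtain ⟨m', rfl⟩ : ∃ m', m = m' + 1 := ⟨m - 1, by omega⟩
  exact cycleGraph_connected

lemma cycle_dist_sum' {m k : ℕ} (hm : m = 2 * k) (hk : 0 < k) (u : Fin m) :
    ∑ v : Fin m, (cycleGraph m).dist u v = k * k := by
  subst hm
  exact cycle_dist_sum k hk u

/-- Rotation of the cycle graph. -/
def cycleTranslate {m : ℕ} [NeZero m] (t : Fin m) : cycleGraph m ≃g cycleGraph m where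
  toEquiv := Equiv.addRight t
  map_rel_iff' := by
    intro a b
    simp only [Equiv.coe_addRight]
    rw [cycleGraph_adj', cycleGraph_adj', add_sub_add_right_eq_sub,
      add_sub_add_right_eq_sub]

set_option maxHeartbeats 1600000 in
/-- For the Cartesian product `G = C_{n₁} □ ⋯ □ C_{n_r}` of even
cycles (each `nᵢ` even, `nᵢ ≥ 4`), every vertex `v` satisfies
`B(v) = (1/8)·[ (∏ᵢ nᵢ)·(∑ᵢ nᵢ) - 4·(∏ᵢ nᵢ - 1) ]`; equivalently, with `nᵢ = 2kᵢ`,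
`B(v) = 2^(r-2)·(∏ᵢ kᵢ)·(∑ᵢ kᵢ - 2) + 1/2` (rational power of `2`). -/
theorem betweenness_boxProdPi_evenCycles {r : ℕ} (n k : Fin r → ℕ)
    (heven : ∀ i, Even (n i)) (hn : ∀ i, 4 ≤ n i) (hk : ∀ i, n i = 2 * k i)
    (v : ∀ i, Fin (n i)) :
    betweenness (boxProdPi fun i => cycleGraph (n i)) v =
        (1 / 8) * ((∏ i, (n i : ℚ)) * (∑ i, (n i : ℚ)) - 4 * ((∏ i, (n i : ℚ)) - 1)) ∧
    betweenness (boxProdPi fun i => cycleGraph (n i)) v =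
        (2 : ℚ) ^ ((r : ℤ) - 2) * (∏ i, (k i : ℚ)) * ((∑ i, (k i : ℚ)) - 2) + 1 / 2 := by
  classical
  set Gr := boxProdPi fun i => cycleGraph (n i) with hGr
  have hNe : ∀ i, NeZero (n i) := fun i => ⟨by have := hn i; omega⟩
  have hcyc : ∀ i, (cycleGraph (n i)).Connected :=
    fun i => cycleGraph_connected' (by have := hn i; omega)
  have hGconn : Gr.Connected := boxProdPi_connected hcyc
  have hkpos : ∀ i, 0 < k i := fun i => by have h1 := hn i; have h2 := hk i; omega
  -- vertex transitivity
  have htrans : ∀ x y : (∀ i, Fin (n i)), ∃ f : Gr ≃g Gr, f x = y := by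
    intro x y
    refine ⟨boxProdPiIso (fun i => @cycleTranslate (n i) (hNe i) (y i - x i)), ?_⟩
    funext i
    show x i + (y i - x i) = y i
    haveI := hNe i
    rw [add_comm]
    exact sub_add_cancel (y i) (x i)
  have hconst : ∀ x, betweenness Gr x = betweenness Gr v :=
    fun x => betweenness_const htrans x v
  -- notation
  set Nn : ℕ := ∏ i, n i with hNn
  have hNnpos : 0 < Nn := Finset.prod_pos fun i _ => by have := hn i; omega
  have hcard : Fintype.card (∀ i, Fin (n i)) = Nn := by
    rw [Fintype.card_pi]
    exact Finset.prod_congr rfl fun i _ => Fintype.card_fin (n i)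
  -- distance sum for a fixed first endpoint
  have hdist : ∀ u : (∀ i, Fin (n i)), ∑ w, Gr.dist u w
      = ∑ i, (∏ j ∈ Finset.univ.erase i, n j) * (k i * k i) := by
    intro u
    calc ∑ w, Gr.dist u w
        = ∑ w, ∑ i, (cycleGraph (n i)).dist (u i) (w i) :=
          Finset.sum_congr rfl fun w _ => boxProdPi_dist hcyc u w
      _ = ∑ i, ∑ w : (∀ j, Fin (n j)), (cycleGraph (n i)).dist (u i) (w i) :=
          Finset.sum_comm
      _ = ∑ i, (∏ j ∈ Finset.univ.erase i, n j) * (k i * k i) := by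
          refine Finset.sum_congr rfl fun i _ => ?_
          rw [← Equiv.sum_comp (Equiv.piSplitAt i (fun j => Fin (n j))).symm
            (fun w => (cycleGraph (n i)).dist (u i) (w i))]
          have happ : ∀ p : Fin (n i) × (∀ j : {j // j ≠ i}, Fin (n j)),
              ((Equiv.piSplitAt i (fun j => Fin (n j))).symm p) i = p.1 := by
            intro p
            simp [Equiv.piSplitAt_symm_apply]
          calc ∑ p : Fin (n i) × (∀ j : {j // j ≠ i}, Fin (n j)),
                (cycleGraph (n i)).dist (u i)
                  (((Equiv.piSplitAt i (fun j => Fin (n j))).symm p) i)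
              = ∑ p : Fin (n i) × (∀ j : {j // j ≠ i}, Fin (n j)),
                (cycleGraph (n i)).dist (u i) p.1 :=
                Finset.sum_congr rfl fun p _ => by rw [happ]
            _ = ∑ a : Fin (n i), ∑ _b : (∀ j : {j // j ≠ i}, Fin (n j)),
                (cycleGraph (n i)).dist (u i) a := by rw [Fintype.sum_prod_type]
            _ = ∑ a : Fin (n i), (Fintype.card (∀ j : {j // j ≠ i}, Fin (n j)))
                  * (cycleGraph (n i)).dist (u i) a := by
                refine Finset.sum_congr rfl fun a _ => ?_
                rw [Finset.sum_const, Finset.card_univ, smul_eq_mul]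
            _ = (∏ j ∈ Finset.univ.erase i, n j) * (k i * k i) := by
                rw [← Finset.mul_sum, cycle_dist_sum' (hk i) (hkpos i) (u i)]
                congr 1
                calc Fintype.card (∀ j : {j // j ≠ i}, Fin (n j))
                    = ∏ j : {j // j ≠ i}, Fintype.card (Fin (n j.1)) := Fintype.card_pi
                  _ = ∏ j : {j // j ≠ i}, n j.1 :=
                      Finset.prod_congr rfl fun j _ => Fintype.card_fin (n j.1)
                  _ = ∏ j ∈ Finset.univ.erase i, n j :=
                      (Finset.prod_subtype (Finset.univ.erase i)
                        (fun j => by simp [Finset.mem_erase]) n).symm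
  -- the key equation
  set T : ℚ := ((∑ i, (∏ j ∈ Finset.univ.erase i, n j) * (k i * k i) : ℕ) : ℚ) with hT
  have hkey : (Nn : ℚ) * betweenness Gr v = (1/2) * ((Nn : ℚ) * (T - ((Nn : ℚ) - 1))) := by
    have h0 : ∑ x, betweenness Gr x = (Nn : ℚ) * betweenness Gr v := by
      rw [Finset.sum_congr rfl fun x _ => hconst x, Finset.sum_const, Finset.card_univ,
        hcard, nsmul_eq_mul]
    rw [← h0, sum_betweenness hGconn]
    congr 1
    calc ∑ u, ∑ w, (if u ≠ w then ((Gr.dist u w : ℚ) - 1) else 0)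
        = ∑ u : (∀ i, Fin (n i)), (T - ((Nn : ℚ) - 1)) := by
          refine Finset.sum_congr rfl fun u _ => ?_
          have hsplit : ∀ w, (if u ≠ w then ((Gr.dist u w : ℚ) - 1) else 0)
              = (Gr.dist u w : ℚ) - (if u ≠ w then 1 else 0) := by
            intro w
            split_ifs with h
            · ring
            · push_neg at h
              subst h
              rw [SimpleGraph.dist_self]
              norm_num
          rw [Finset.sum_congr rfl fun w _ => hsplit w, Finset.sum_sub_distrib]
          congr 1
          · rw [← Nat.cast_sum, hdist u, hT]
          · rw [Finset.sum_ite, Finset.sum_const_zero, add_zero, Finset.sum_const,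
              nsmul_eq_mul, mul_one]
            have : Finset.filter (fun w => u ≠ w) Finset.univ = Finset.univ.erase u := by
              ext w
              simp [Finset.mem_erase, ne_comm]
            rw [this, Finset.card_erase_of_mem (Finset.mem_univ u), Finset.card_univ, hcard]
            have : (1 : ℕ) ≤ Nn := hNnpos
            push_cast [Nat.cast_sub this]
            ring
      _ = (Nn : ℚ) * (T - ((Nn : ℚ) - 1)) := by
          rw [Finset.sum_const, Finset.card_univ, hcard, nsmul_eq_mul]
  have hNne : (Nn : ℚ) ≠ 0 := by
    exact_mod_cast hNnpos.ne'
  have hBv : betweenness Gr v = (1/2) * (T - ((Nn : ℚ) - 1)) := by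
    have := hkey
    field_simp at this ⊢
    linarith [mul_left_cancel₀ hNne (by linarith : (Nn:ℚ) * betweenness Gr v
      = (Nn:ℚ) * ((1/2) * (T - ((Nn : ℚ) - 1))))]
  -- identify T with N * S / 4
  have hprodcast : (∏ i, (n i : ℚ)) = (Nn : ℚ) := by
    rw [hNn]
    push_cast
    rfl
  have hNS : (Nn : ℚ) * (∑ i, (n i : ℚ)) = 4 * T := by
    rw [hT]
    push_cast
    rw [Finset.mul_sum, Finset.mul_sum]
    refine Finset.sum_congr rfl fun i _ => ?_
    have hNin : Nn = (∏ j ∈ Finset.univ.erase i, n j) * n i := by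
      rw [hNn, mul_comm]
      exact (Finset.mul_prod_erase Finset.univ n (Finset.mem_univ i)).symm
    have hNi : (Nn : ℚ) = (∏ j ∈ Finset.univ.erase i, (n j : ℚ)) * (n i : ℚ) := by
      exact_mod_cast hNin
    have hki : (n i : ℚ) = 2 * (k i : ℚ) := by exact_mod_cast congrArg Nat.cast (hk i)
    rw [hNi, hki]
    ring
  have goal1 : betweenness Gr v =
      (1 / 8) * ((∏ i, (n i : ℚ)) * (∑ i, (n i : ℚ)) - 4 * ((∏ i, (n i : ℚ)) - 1)) := by
    rw [hBv, hprodcast]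
    linear_combination (-1/8) * hNS
  refine ⟨goal1, ?_⟩
  rw [goal1]
  have hNk : (∏ i, (n i : ℚ)) = 2 ^ r * ∏ i, (k i : ℚ) := by
    calc (∏ i, (n i : ℚ)) = ∏ i, (2 * (k i : ℚ)) := by
          refine Finset.prod_congr rfl fun i _ => ?_
          exact_mod_cast congrArg Nat.cast (hk i)
      _ = (∏ _i : Fin r, (2:ℚ)) * ∏ i, (k i : ℚ) := Finset.prod_mul_distrib
      _ = 2 ^ r * ∏ i, (k i : ℚ) := by
          rw [Finset.prod_const, Finset.card_univ, Fintype.card_fin]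
  have hSk : (∑ i, (n i : ℚ)) = 2 * ∑ i, (k i : ℚ) := by
    rw [Finset.mul_sum]
    refine Finset.sum_congr rfl fun i _ => ?_
    exact_mod_cast congrArg Nat.cast (hk i)
  have hz : (2 : ℚ) ^ ((r : ℤ) - 2) = 2 ^ r / 4 := by
    rw [zpow_sub₀ (by norm_num : (2:ℚ) ≠ 0), zpow_natCast]
    norm_num
  rw [hNk, hSk, hz]
  ring

end main
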